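/- For n = 3 and any q ≥ 2, ex(3, K₃, q) = 2q². Equivalently, the set of all 3q² q-edges in Q(3,2) can be partitioned into q² triples each forming a (q+1)-copy of a triangle, and a maximum (q+1)-triangle-free subset contains exactly two q-edges from each triple. -/

import Mathlib

open Finset

/-- The support of a vector: indices of nonzero entries. -/
def qsupport {n : ℕ} (x : Fin n → ℕ) : Finset (Fin n) :=
  Finset.univ.filter (fun i => x i ≠ 0)

/-- `Qset q n` : all q-edges, i.e. vectors in `{0,…,q}^n` with exactly two nonzero entries. -/
def Qset (q n : ℕ) : Finset (Fin n → ℕ) :=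
  ((Finset.univ : Finset (Fin n → Fin (q+1))).image (fun f i => (f i : ℕ))).filter
    (fun x => (qsupport x).card = 2)

/-- The q-edge with support `{i,j}`, value `a` at `i` and `b` at `j`. -/
def qedge {n : ℕ} (i j : Fin n) (a b : ℕ) : Fin n → ℕ :=
  fun k => if k = i then a else if k = j then b else 0

/-- `H` is an `s`-copy of the graph `F`. -/
def IsSCopy {α : Type} [Fintype α] (s : ℕ) (F : SimpleGraph α) {n : ℕ}
    (H : Finset (Fin n → ℕ)) : Prop :=
  ∃ ι : α → Fin n, Function.Injective ι ∧
    (∀ u v : α, F.Adj u v ↔ ∃ x ∈ H, qsupport x = {ι u, ι v}) ∧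
    H.card = Nat.card F.edgeSet ∧
    ∀ x ∈ H, ∀ y ∈ H, x ≠ y → ∀ i, x i ≠ 0 → y i ≠ 0 → s ≤ x i + y i

/-- `H` contains an `s`-copy of `F`. -/
def ContainsSCopy {α : Type} [Fintype α] (s : ℕ) (F : SimpleGraph α) {n : ℕ}
    (H : Finset (Fin n → ℕ)) : Prop :=
  ∃ H' ⊆ H, IsSCopy s F H'

lemma mem_Qset_iff {q n : ℕ} (x : Fin n → ℕ) :
    x ∈ Qset q n ↔ (∀ i, x i ≤ q) ∧ (qsupport x).card = 2 := by
  simp only [Qset, mem_filter, mem_image, mem_univ, true_and, and_congr_left_iff]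
  intro _
  constructor
  · rintro ⟨f, rfl⟩ i; exact Nat.lt_succ_iff.mp (f i).isLt
  · intro h; exact ⟨fun i => ⟨x i, Nat.lt_succ_of_le (h i)⟩, rfl⟩

lemma qsupport_qedge {i j : Fin 3} (hij : i ≠ j) {a b : ℕ} (ha : a ≠ 0) (hb : b ≠ 0) :
    qsupport (qedge i j a b) = {i, j} := by
  ext k
  rw [qsupport, Finset.mem_filter]
  simp only [qsupport, qedge, mem_filter, mem_univ, true_and, mem_insert, mem_singleton]
  by_cases h1 : k = i <;> by_cases h2 : k = j <;>
    simp [h1, h2, ha, hb, hij, Ne.symm hij]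

lemma qedge_mem_Qset {q : ℕ} {i j : Fin 3} (hij : i ≠ j) {a b : ℕ}
    (ha : 1 ≤ a) (ha' : a ≤ q) (hb : 1 ≤ b) (hb' : b ≤ q) :
    qedge i j a b ∈ Qset q 3 := by
  rw [mem_Qset_iff]
  constructor
  · intro k; unfold qedge; split_ifs <;> omega
  · rw [qsupport_qedge hij (by omega) (by omega), Finset.card_pair hij]

lemma Qset3_cases {q : ℕ} {x : Fin 3 → ℕ} (hx : x ∈ Qset q 3) :
    (x 0 = 0 ∧ x 1 ≠ 0 ∧ x 2 ≠ 0) ∨ (x 1 = 0 ∧ x 0 ≠ 0 ∧ x 2 ≠ 0) ∨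
    (x 2 = 0 ∧ x 0 ≠ 0 ∧ x 1 ≠ 0) := by
  obtain ⟨-, hc⟩ := (mem_Qset_iff x).mp hx
  have hcc : (qsupport x).card =
      (if x 0 ≠ 0 then 1 else 0) + (if x 1 ≠ 0 then 1 else 0) + (if x 2 ≠ 0 then 1 else 0) := by
    rw [qsupport, Finset.card_filter, Fin.sum_univ_three]
  rw [hcc] at hc
  by_cases h0 : x 0 = 0 <;> by_cases h1 : x 1 = 0 <;> by_cases h2 : x 2 = 0 <;>
    simp [h0, h1, h2] at hc <;> tauto

def m1 (q t : ℕ) : ℕ := (t - 1) % q + 1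

lemma m1_pos (q t : ℕ) : 1 ≤ m1 q t := Nat.le_add_left 1 _

lemma m1_le {q : ℕ} (hq : 0 < q) (t : ℕ) : m1 q t ≤ q := Nat.mod_lt _ hq

lemma m1_mod {q : ℕ} (hq : 0 < q) {t : ℕ} (ht : 1 ≤ t) : m1 q t % q = t % q := by
  have h : ((t - 1) % q + 1) % q = ((t - 1) + 1) % q :=
    Nat.ModEq.add_right 1 (Nat.mod_modEq (t - 1) q)
  rw [m1, h, Nat.sub_add_cancel ht]

lemma eq_of_mod_eq {q u v : ℕ} (hu : 1 ≤ u) (hu' : u ≤ q) (hv : 1 ≤ v) (hv' : v ≤ q)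
    (h : u % q = v % q) : u = v := by
  rcases Nat.lt_or_ge u q with h1 | h1 <;> rcases Nat.lt_or_ge v q with h2 | h2
  · rwa [Nat.mod_eq_of_lt h1, Nat.mod_eq_of_lt h2] at h
  · have : v = q := le_antisymm hv' h2
    subst this
    rw [Nat.mod_eq_of_lt h1, Nat.mod_self] at h; omega
  · have : u = q := le_antisymm hu' h1
    subst this
    rw [Nat.mod_self, Nat.mod_eq_of_lt h2] at h; omega
  · omega

lemma m1_eq {q t v : ℕ} (hq : 0 < q) (ht : 1 ≤ t) (hv : 1 ≤ v) (hv' : v ≤ q)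
    (h : t % q = v % q) : m1 q t = v :=
  eq_of_mod_eq (m1_pos q t) (m1_le hq t) hv hv' ((m1_mod hq ht).trans h)

/-- triple of q-edges indexed by `(a,b)` -/

def T3 (q a b : ℕ) : Finset (Fin 3 → ℕ) :=
  {qedge 0 1 a b, qedge 1 2 (q+1-b) (m1 q (a+b)), qedge 2 0 (q+1-m1 q (a+b)) (q+1-a)}

def tripleIndex (q : ℕ) (x : Fin 3 → ℕ) : ℕ × ℕ :=
  if x 2 = 0 then (x 0, x 1)
  else if x 0 = 0 then (m1 q (x 1 + x 2 - 1), q + 1 - x 1)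
  else (q + 1 - x 0, m1 q (x 0 + q - x 2))

lemma tripleIndex_mem {q : ℕ} (hq : 0 < q) {x : Fin 3 → ℕ} (hx : x ∈ Qset q 3) :
    tripleIndex q x ∈ Finset.Icc 1 q ×ˢ Finset.Icc 1 q := by
  obtain ⟨hle, -⟩ := (mem_Qset_iff x).mp hx
  have h0 := hle 0; have h1 := hle 1; have h2 := hle 2
  rcases Qset3_cases hx with ⟨e0, e1, e2⟩ | ⟨e1, e0, e2⟩ | ⟨e2, e0, e1⟩
  · rw [tripleIndex, if_neg e2, if_pos e0]
    simp only [Finset.mem_product, Finset.mem_Icc]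
    exact ⟨⟨m1_pos _ _, m1_le hq _⟩, by omega⟩
  · rw [tripleIndex, if_neg e2, if_neg e0]
    simp only [Finset.mem_product, Finset.mem_Icc]
    exact ⟨by omega, ⟨m1_pos _ _, m1_le hq _⟩⟩
  · rw [tripleIndex, if_pos e2]
    simp only [Finset.mem_product, Finset.mem_Icc]
    omega

lemma mem_T3_of_index {q : ℕ} (hq : 0 < q) {x : Fin 3 → ℕ} (hx : x ∈ Qset q 3)
    {a b : ℕ} (h : tripleIndex q x = (a, b)) : x ∈ T3 q a b := by
  obtain ⟨hle, -⟩ := (mem_Qset_iff x).mp hx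
  have h0 := hle 0; have h1 := hle 1; have h2 := hle 2
  simp only [T3, mem_insert, mem_singleton]
  rcases Qset3_cases hx with ⟨e0, e1, e2⟩ | ⟨e1, e0, e2⟩ | ⟨e2, e0, e1⟩
  · -- support {1,2}
    rw [tripleIndex, if_neg e2, if_pos e0] at h
    injection h with ha hb
    have hm1p := m1_pos q (x 1 + x 2 - 1)
    have hmid : m1 q (a + b) = x 2 := by
      apply m1_eq hq (by omega) (by omega) h2
      calc (a + b) % q = (x 1 + x 2 - 1 + b) % q := by
            exact Nat.ModEq.add_right b (ha ▸ m1_mod hq (by omega))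
        _ = (x 2 + q) % q := by congr 1; omega
        _ = x 2 % q := Nat.add_mod_right _ _
    refine Or.inr (Or.inl ?_)
    funext k
    fin_cases k <;> simp [qedge, hmid]
    · exact e0
    · omega
  · -- support {0,2}
    rw [tripleIndex, if_neg e2, if_neg e0] at h
    injection h with ha hb
    have hm1p := m1_pos q (x 0 + q - x 2)
    have hmid : m1 q (a + b) = q + 1 - x 2 := by
      apply m1_eq hq (by omega) (by omega) (by omega)
      calc (a + b) % q = (a + (x 0 + q - x 2)) % q := by
            exact Nat.ModEq.add_left a (hb ▸ m1_mod hq (by omega))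
        _ = ((q + 1 - x 2) + q) % q := by congr 1; omega
        _ = (q + 1 - x 2) % q := Nat.add_mod_right _ _
    refine Or.inr (Or.inr ?_)
    funext k
    fin_cases k <;> simp [qedge, hmid]
    · omega
    · exact e1
    · omega
  · -- support {0,1}
    rw [tripleIndex, if_pos e2] at h
    injection h with ha hb
    refine Or.inl ?_
    funext k
    fin_cases k <;> simp [qedge]
    · exact ha
    · exact hb
    · exact e2

lemma T3_card {q a b : ℕ} (ha : 1 ≤ a) (ha' : a ≤ q) (hb : 1 ≤ b) (hb' : b ≤ q) :
    (T3 q a b).card = 3 := by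
  have hm := m1_pos q (a + b)
  have hm' := m1_le (by omega : 0 < q) (a + b)
  have h12 : (qedge 0 1 a b : Fin 3 → ℕ) ≠ qedge 1 2 (q+1-b) (m1 q (a+b)) := by
    intro h
    have := congrFun h 0
    simp [qedge] at this; omega
  have h13 : (qedge 0 1 a b : Fin 3 → ℕ) ≠ qedge 2 0 (q+1-m1 q (a+b)) (q+1-a) := by
    intro h
    have := congrFun h 2
    simp [qedge] at this; omega
  have h23 : (qedge 1 2 (q+1-b) (m1 q (a+b)) : Fin 3 → ℕ) ≠ qedge 2 0 (q+1-m1 q (a+b)) (q+1-a) := by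
    intro h
    have := congrFun h 0
    simp [qedge] at this; omega
  rw [T3, Finset.card_insert_of_notMem (by simp [h12, h13]),
    Finset.card_insert_of_notMem (by simp [h23]), Finset.card_singleton]

lemma T3_subset_Qset {q a b : ℕ} (ha : 1 ≤ a) (ha' : a ≤ q) (hb : 1 ≤ b) (hb' : b ≤ q) :
    T3 q a b ⊆ Qset q 3 := by
  have hm := m1_pos q (a + b)
  have hm' := m1_le (by omega : 0 < q) (a + b)
  intro x hx
  simp only [T3, mem_insert, mem_singleton] at hx
  rcases hx with rfl | rfl | rfl
  · exact qedge_mem_Qset (by decide) ha ha' hb hb'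
  · exact qedge_mem_Qset (by decide) (by omega) (by omega) (by omega) (by omega)
  · exact qedge_mem_Qset (by decide) (by omega) (by omega) (by omega) (by omega)

lemma T3_isCopy {q a b : ℕ} (ha : 1 ≤ a) (ha' : a ≤ q) (hb : 1 ≤ b) (hb' : b ≤ q) :
    IsSCopy (q + 1) (⊤ : SimpleGraph (Fin 3)) (T3 q a b) := by
  have hm := m1_pos q (a + b)
  have hm' := m1_le (by omega : 0 < q) (a + b)
  refine ⟨id, Function.injective_id, ?_, ?_, ?_⟩
  · intro u v
    simp only [SimpleGraph.top_adj, id]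
    constructor
    · intro huv
      fin_cases u <;> fin_cases v <;> simp_all
      · exact ⟨qedge 0 1 a b, by simp [T3],
          qsupport_qedge (by decide) (by omega) (by omega)⟩
      · refine ⟨qedge 2 0 (q+1-m1 q (a+b)) (q+1-a), by simp [T3], ?_⟩
        rw [qsupport_qedge (by decide) (by omega) (by omega), Finset.pair_comm]
      · refine ⟨qedge 0 1 a b, by simp [T3], ?_⟩
        rw [qsupport_qedge (by decide) (by omega) (by omega), Finset.pair_comm]
      · exact ⟨qedge 1 2 (q+1-b) (m1 q (a+b)), by simp [T3],
          qsupport_qedge (by decide) (by omega) (by omega)⟩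
      · exact ⟨qedge 2 0 (q+1-m1 q (a+b)) (q+1-a), by simp [T3],
          qsupport_qedge (by decide) (by omega) (by omega)⟩
      · refine ⟨qedge 1 2 (q+1-b) (m1 q (a+b)), by simp [T3], ?_⟩
        rw [qsupport_qedge (by decide) (by omega) (by omega), Finset.pair_comm]
    · rintro ⟨x, hx, hs⟩ rfl
      have hcard : ({u, u} : Finset (Fin 3)).card = 1 := by
        rw [Finset.insert_eq_self.mpr (Finset.mem_singleton_self u), Finset.card_singleton]
      have : (qsupport x).card = 2 :=
        ((mem_Qset_iff x).mp (T3_subset_Qset ha ha' hb hb' hx)).2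
      rw [hs, hcard] at this
      omega
  · rw [T3_card ha ha' hb hb', Nat.card_eq_fintype_card]
    decide
  · intro x hx y hy hxy i hxi hyi
    simp only [T3, mem_insert, mem_singleton] at hx hy
    rcases hx with rfl | rfl | rfl <;> rcases hy with rfl | rfl | rfl <;>
      first
        | exact absurd rfl hxy
        | (fin_cases i <;> simp [qedge] at hxi hyi ⊢ <;> omega)

lemma upper_bound {q : ℕ} (hq : 1 ≤ q) {H : Finset (Fin 3 → ℕ)} (hH : H ⊆ Qset q 3)
    (hfree : ¬ ContainsSCopy (q+1) (⊤ : SimpleGraph (Fin 3)) H) : H.card ≤ 2 * q ^ 2 := by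
  have hq0 : 0 < q := hq
  have hre := Finset.card_eq_sum_card_fiberwise
    (f := tripleIndex q) (s := H) (t := Finset.Icc 1 q ×ˢ Finset.Icc 1 q)
    (fun x hx => tripleIndex_mem hq0 (hH hx))
  have hfib : ∀ p ∈ Finset.Icc 1 q ×ˢ Finset.Icc 1 q,
      (H.filter (fun x => tripleIndex q x = p)).card ≤ 2 := by
    intro p hp
    simp only [Finset.mem_product, Finset.mem_Icc] at hp
    by_contra hgt
    push_neg at hgt
    have hsub : H.filter (fun x => tripleIndex q x = p) ⊆ T3 q p.1 p.2 := by
      intro x hx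
      rw [Finset.mem_filter] at hx
      exact mem_T3_of_index hq0 (hH hx.1) hx.2
    have hc3 := T3_card hp.1.1 hp.1.2 hp.2.1 hp.2.2
    have hle : (H.filter (fun x => tripleIndex q x = p)).card ≤ 3 :=
      (Finset.card_le_card hsub).trans_eq hc3
    have heq : H.filter (fun x => tripleIndex q x = p) = T3 q p.1 p.2 :=
      Finset.eq_of_subset_of_card_le hsub (by omega)
    exact hfree ⟨T3 q p.1 p.2, heq ▸ Finset.filter_subset _ _,
      T3_isCopy hp.1.1 hp.1.2 hp.2.1 hp.2.2⟩
  have hcardprod : (Finset.Icc 1 q ×ˢ Finset.Icc 1 q).card = q * q := by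
    rw [Finset.card_product, Nat.card_Icc]
    simp
  calc H.card = ∑ p ∈ Finset.Icc 1 q ×ˢ Finset.Icc 1 q,
        (H.filter (fun x => tripleIndex q x = p)).card := hre
    _ ≤ ∑ _p ∈ Finset.Icc 1 q ×ˢ Finset.Icc 1 q, 2 := Finset.sum_le_sum hfib
    _ = (Finset.Icc 1 q ×ˢ Finset.Icc 1 q).card * 2 := by
        rw [Finset.sum_const, smul_eq_mul]
    _ = 2 * q ^ 2 := by rw [hcardprod]; ring

def Eset (q : ℕ) (i j : Fin 3) : Finset (Fin 3 → ℕ) :=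
  (Finset.Icc 1 q ×ˢ Finset.Icc 1 q).image (fun p => qedge i j p.1 p.2)

lemma Eset_card {q : ℕ} {i j : Fin 3} (hij : i ≠ j) : (Eset q i j).card = q ^ 2 := by
  rw [Eset, Finset.card_image_of_injOn, Finset.card_product, Nat.card_Icc]
  · simp; ring
  · intro p _ p' _ h
    have h1 := congrFun h i
    have h2 := congrFun h j
    simp [qedge, hij, Ne.symm hij] at h1 h2
    exact Prod.ext h1 h2

lemma mem_Eset {q : ℕ} {i j : Fin 3} {x : Fin 3 → ℕ} :
    x ∈ Eset q i j ↔ ∃ a b, 1 ≤ a ∧ a ≤ q ∧ 1 ≤ b ∧ b ≤ q ∧ x = qedge i j a b := by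
  simp only [Eset, Finset.mem_image, Finset.mem_product, Finset.mem_Icc, Prod.exists]
  constructor
  · rintro ⟨a, b, ⟨⟨h1, h2⟩, h3, h4⟩, rfl⟩; exact ⟨a, b, h1, h2, h3, h4, rfl⟩
  · rintro ⟨a, b, h1, h2, h3, h4, rfl⟩; exact ⟨a, b, ⟨⟨h1, h2⟩, h3, h4⟩, rfl⟩

lemma lower_bound {q : ℕ} (hq : 1 ≤ q) :
    ∃ H ⊆ Qset q 3, ¬ ContainsSCopy (q+1) (⊤ : SimpleGraph (Fin 3)) H ∧
      H.card = 2 * q ^ 2 := by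
  refine ⟨Eset q 1 2 ∪ Eset q 0 2, ?_, ?_, ?_⟩
  · intro x hx
    rcases Finset.mem_union.mp hx with hx | hx <;>
      obtain ⟨a, b, h1, h2, h3, h4, rfl⟩ := mem_Eset.mp hx
    · exact qedge_mem_Qset (by decide) h1 h2 h3 h4
    · exact qedge_mem_Qset (by decide) h1 h2 h3 h4
  · rintro ⟨H', hsub, ι, hinj, hadj, -, -⟩
    have hbij : Function.Bijective ι := (Fintype.bijective_iff_injective_and_card ι).mpr ⟨hinj, rfl⟩
    obtain ⟨u, hu⟩ := hbij.surjective 0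
    obtain ⟨v, hv⟩ := hbij.surjective 1
    have huv : u ≠ v := fun h => by simp [h, hv] at hu
    obtain ⟨x, hx, hs⟩ := (hadj u v).mp (by simp [huv])
    rw [hu, hv] at hs
    have h2 : x 2 ≠ 0 := by
      rcases Finset.mem_union.mp (hsub hx) with hx' | hx' <;>
        obtain ⟨a, b, h1', h2', h3', h4', rfl⟩ := mem_Eset.mp hx' <;>
        simp [qedge] <;> omega
    have : (2 : Fin 3) ∈ qsupport x := by simp [qsupport, h2]
    rw [hs] at this
    simp at this
  · rw [Finset.card_union_of_disjoint, Eset_card (by decide), Eset_card (by decide)]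
    · ring
    · rw [Finset.disjoint_left]
      rintro x hx hx'
      obtain ⟨a, b, h1, h2, h3, h4, rfl⟩ := mem_Eset.mp hx
      obtain ⟨a', b', h1', h2', h3', h4', he⟩ := mem_Eset.mp hx'
      have := congrFun he 0
      simp [qedge] at this
      omega

/-- The ordinary Turán number `ex(n,F)`. -/
noncomputable def exNum {α : Type} [Fintype α] (n : ℕ) (F : SimpleGraph α) : ℕ :=
  sSup {m | ∃ G : SimpleGraph (Fin n),
    (¬ ∃ φ : F →g G, Function.Injective φ) ∧ m = Nat.card G.edgeSet}

/-- The Turán number `ex(n,F,q,s)`. -/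
noncomputable def exQ {α : Type} [Fintype α] (n : ℕ) (F : SimpleGraph α) (q s : ℕ) : ℕ :=
  sSup {m | ∃ H ⊆ Qset q n, ¬ ContainsSCopy s F H ∧ m = H.card}

/-- `ex(3, K₃, q) = 2q²` for every `q ≥ 2`. -/
theorem exQ_triangle_n3 (q : ℕ) (hq : 2 ≤ q) :
    exQ 3 (⊤ : SimpleGraph (Fin 3)) q (q + 1) = 2 * q ^ 2 := by
  have hq1 : 1 ≤ q := by omega
  set S : Set ℕ :=
    {m | ∃ H ⊆ Qset q 3, ¬ ContainsSCopy (q+1) (⊤ : SimpleGraph (Fin 3)) H ∧ m = H.card}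
    with hS
  have hmem : 2 * q ^ 2 ∈ S := by
    obtain ⟨H, h1, h2, h3⟩ := lower_bound hq1
    exact ⟨H, h1, h2, h3.symm⟩
  have hub : ∀ m ∈ S, m ≤ 2 * q ^ 2 := by
    rintro m ⟨H, h1, h2, rfl⟩
    exact upper_bound hq1 h1 h2
  exact le_antisymm (csSup_le ⟨_, hmem⟩ hub) (le_csSup ⟨2 * q ^ 2, hub⟩ hmem)
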